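/- Let m and n be coprime positive integers with n ≤ 3, and set δ = (m−1)(n−1)/2. Then for all (a, b) ∈ ℕ×ℕ, the number of Young diagrams D below the diagonal of the m×n rectangle with δ − |D| = a and h₊(D) = b equals the number of such diagrams with δ − |D| = b and h₊(D) = a. (This is the symmetry c_{m,n}(q,t) = c_{m,n}(t,q) when min(m,n) ≤ 3.) -/

import Mathlib

/-- A Young diagram as a downward-closed finite set of cells `(x, y)` (column, row). -/
def IsYoung (D : Finset (ℕ × ℕ)) : Prop :=
  ∀ x y x' y', (x, y) ∈ D → x' ≤ x → y' ≤ y → (x', y') ∈ D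

/-- `D` lies below the diagonal of the `m × n` rectangle. -/
def BelowDiag (m n : ℕ) (D : Finset (ℕ × ℕ)) : Prop :=
  ∀ c ∈ D, n * (c.1 + 1) + m * (c.2 + 1) < m * n

/-- Arm length of the cell `c` in `D`. -/
def arm (D : Finset (ℕ × ℕ)) (c : ℕ × ℕ) : ℕ :=
  (D.filter (fun c' => c'.2 = c.2 ∧ c.1 < c'.1)).card

/-- Leg length of the cell `c` in `D`. -/
def leg (D : Finset (ℕ × ℕ)) (c : ℕ × ℕ) : ℕ :=
  (D.filter (fun c' => c'.1 = c.1 ∧ c.2 < c'.2)).card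

/-- The statistic `h₊`: the number of cells `c ∈ D` with
`n·a(c) ≤ m·(l(c)+1)` and `m·l(c) < n·(a(c)+1)`. -/
def hplus (m n : ℕ) (D : Finset (ℕ × ℕ)) : ℕ :=
  (D.filter (fun c =>
    n * arm D c ≤ m * (leg D c + 1) ∧ m * leg D c < n * (arm D c + 1))).card

open Finset

def twoRow (p q : ℕ) : Finset (ℕ × ℕ) :=
  ((Finset.range p).image fun x => (x, 0)) ∪ ((Finset.range q).image fun x => (x, 1))

lemma mem_twoRow {p q x y : ℕ} :
    (x, y) ∈ twoRow p q ↔ (y = 0 ∧ x < p) ∨ (y = 1 ∧ x < q) := by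
  simp [twoRow, Finset.mem_union, Finset.mem_image, Prod.ext_iff]
  constructor
  · rintro (⟨u, hu, rfl, rfl⟩ | ⟨u, hu, rfl, rfl⟩) <;> simp_all
  · rintro (⟨rfl, h⟩ | ⟨rfl, h⟩)
    · exact Or.inl ⟨h, rfl⟩
    · exact Or.inr ⟨h, rfl⟩

lemma card_twoRow (p q : ℕ) : (twoRow p q).card = p + q := by
  rw [twoRow, Finset.card_union_of_disjoint, Finset.card_image_of_injective,
    Finset.card_image_of_injective, Finset.card_range, Finset.card_range]
  · intro a b h; simpa using h
  · intro a b h; simpa using h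
  · simp only [Finset.disjoint_left, Finset.mem_image]
    rintro ⟨x, y⟩ ⟨u, hu, h⟩ ⟨v, hv, h2⟩
    rw [Prod.ext_iff] at h h2
    simp at h h2
    omega

lemma arm_row0 {p q x : ℕ} (hx : x < p) : arm (twoRow p q) (x, 0) = p - (x + 1) := by
  have : (twoRow p q).filter (fun c' => c'.2 = 0 ∧ x < c'.1) =
      (Finset.Ico (x+1) p).image (fun u => (u, 0)) := by
    ext ⟨u, v⟩
    simp only [Finset.mem_filter, mem_twoRow, Finset.mem_image, Finset.mem_Ico, Prod.ext_iff]
    constructor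
    · rintro ⟨h1, rfl, h3⟩
      exact ⟨u, ⟨by omega, by rcases h1 with ⟨_,h⟩|⟨h,_⟩ <;> omega⟩, rfl, rfl⟩
    · rintro ⟨w, hw, rfl, rfl⟩
      exact ⟨Or.inl ⟨rfl, by omega⟩, rfl, by omega⟩
  rw [arm, this, Finset.card_image_of_injective, Nat.card_Ico]
  intro a b h; simpa using h

lemma arm_row1 {p q x : ℕ} (hx : x < q) : arm (twoRow p q) (x, 1) = q - (x + 1) := by
  have : (twoRow p q).filter (fun c' => c'.2 = 1 ∧ x < c'.1) =
      (Finset.Ico (x+1) q).image (fun u => (u, 1)) := by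
    ext ⟨u, v⟩
    simp only [Finset.mem_filter, mem_twoRow, Finset.mem_image, Finset.mem_Ico, Prod.ext_iff]
    constructor
    · rintro ⟨h1, rfl, h3⟩
      exact ⟨u, ⟨by omega, by rcases h1 with ⟨h,_⟩|⟨_,h⟩ <;> omega⟩, rfl, rfl⟩
    · rintro ⟨w, hw, rfl, rfl⟩
      exact ⟨Or.inr ⟨rfl, by omega⟩, rfl, by omega⟩
  rw [arm, this, Finset.card_image_of_injective, Nat.card_Ico]
  intro a b h; simpa using h

lemma leg_row0 {p q x : ℕ} (hq : q ≤ p) (hx : x < p) :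
    leg (twoRow p q) (x, 0) = if x < q then 1 else 0 := by
  have : (twoRow p q).filter (fun c' => c'.1 = x ∧ 0 < c'.2) =
      if x < q then {(x, 1)} else ∅ := by
    split_ifs with h
    · ext ⟨u, v⟩
      simp only [Finset.mem_filter, mem_twoRow, Finset.mem_singleton, Prod.ext_iff]
      constructor
      · rintro ⟨h1, rfl, h3⟩
        rcases h1 with ⟨h2,_⟩|⟨h2,_⟩ <;> omega
      · rintro ⟨rfl, rfl⟩
        exact ⟨Or.inr ⟨rfl, h⟩, rfl, one_pos⟩
    · ext ⟨u, v⟩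
      simp only [Finset.mem_filter, mem_twoRow, Finset.notMem_empty, iff_false, not_and]
      rintro h1 rfl
      rcases h1 with ⟨h2,_⟩|⟨_,h2⟩ <;> omega
  rw [leg, this]
  split_ifs <;> simp

lemma leg_row1 {p q x : ℕ} : leg (twoRow p q) (x, 1) = 0 := by
  rw [leg, Finset.card_eq_zero, Finset.eq_empty_iff_forall_notMem]
  rintro ⟨u, v⟩ hm
  simp only [Finset.mem_filter, mem_twoRow] at hm
  obtain ⟨h1, _, h3⟩ := hm
  rcases h1 with ⟨h2,_⟩|⟨h2,_⟩ <;> omega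

lemma hplus_twoRow (m n p q : ℕ) (hq : q ≤ p) :
    hplus m n (twoRow p q) =
      ((Finset.range p).filter (fun x =>
        n*(p-(x+1)) ≤ m*((if x < q then 1 else 0)+1) ∧
        m*(if x < q then 1 else 0) < n*(p-(x+1)+1))).card +
      ((Finset.range q).filter (fun x =>
        n*(q-(x+1)) ≤ m*(0+1) ∧ m*0 < n*(q-(x+1)+1))).card := by
  rw [hplus]
  have hset : (twoRow p q).filter (fun c =>
      n * arm (twoRow p q) c ≤ m * (leg (twoRow p q) c + 1) ∧
      m * leg (twoRow p q) c < n * (arm (twoRow p q) c + 1)) =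
      (((Finset.range p).filter (fun x =>
        n*(p-(x+1)) ≤ m*((if x < q then 1 else 0)+1) ∧
        m*(if x < q then 1 else 0) < n*(p-(x+1)+1))).image (fun x => (x, 0))) ∪
      (((Finset.range q).filter (fun x =>
        n*(q-(x+1)) ≤ m*(0+1) ∧ m*0 < n*(q-(x+1)+1))).image (fun x => (x, 1))) := by
    ext ⟨x, y⟩
    simp only [Finset.mem_filter, Finset.mem_union, Finset.mem_image, Finset.mem_range]
    constructor
    · rintro ⟨hmem, hP⟩
      rcases mem_twoRow.mp hmem with ⟨rfl, hx⟩ | ⟨rfl, hx⟩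
      · rw [arm_row0 hx, leg_row0 hq hx] at hP
        exact Or.inl ⟨x, ⟨hx, hP⟩, rfl⟩
      · rw [arm_row1 hx, leg_row1] at hP
        exact Or.inr ⟨x, ⟨hx, hP⟩, rfl⟩
    · rintro (⟨u, ⟨hu, hC⟩, heq⟩ | ⟨u, ⟨hu, hC⟩, heq⟩)
      · obtain ⟨rfl, rfl⟩ : u = x ∧ (0 : ℕ) = y := Prod.mk.injEq .. ▸ Prod.ext_iff.mp heq
        refine ⟨mem_twoRow.mpr (Or.inl ⟨rfl, hu⟩), ?_⟩
        rwa [arm_row0 hu, leg_row0 hq hu]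
      · obtain ⟨rfl, rfl⟩ : u = x ∧ (1 : ℕ) = y := Prod.mk.injEq .. ▸ Prod.ext_iff.mp heq
        refine ⟨mem_twoRow.mpr (Or.inr ⟨rfl, hu⟩), ?_⟩
        rwa [arm_row1 hu, leg_row1]
  rw [hset, Finset.card_union_of_disjoint, Finset.card_image_of_injective,
    Finset.card_image_of_injective]
  · intro a b h; simpa using h
  · intro a b h; simpa using h
  · simp only [Finset.disjoint_left, Finset.mem_image]
    rintro ⟨x, y⟩ ⟨u, hu, h⟩ ⟨v, hv, h2⟩
    rw [Prod.ext_iff] at h h2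
    simp at h h2
    omega

lemma dclosed_eq_range (S : Finset ℕ) (h : ∀ x ∈ S, ∀ y, y ≤ x → y ∈ S) :
    S = Finset.range S.card := by
  have hsub : S ⊆ Finset.range S.card := by
    intro x hx
    rw [Finset.mem_range]
    have hsub2 : Finset.range (x+1) ⊆ S := fun y hy => h x hx y (by simpa using Nat.lt_succ_iff.mp (Finset.mem_range.mp hy))
    have := Finset.card_le_card hsub2
    simp only [Finset.card_range] at this
    omega
  exact Finset.eq_of_subset_of_card_le hsub (by simp)

lemma structure_lemma {m n : ℕ} (hm : 0 < m) (hn : 0 < n) (hn3 : n ≤ 3)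
    {D : Finset (ℕ × ℕ)} (hY : IsYoung D) (hB : BelowDiag m n D) :
    ∃ p q, q ≤ p ∧ D = twoRow p q ∧
      (p = 0 ∨ n * p + m < m * n) ∧ (q = 0 ∨ n * q + 2 * m < m * n) := by
  -- every cell has y ≤ 1
  have hy1 : ∀ c ∈ D, c.2 ≤ 1 := by
    intro c hc
    have := hB c hc
    by_contra hgt
    push_neg at hgt
    have h3 : 3 * m ≤ m * (c.2 + 1) := by
      calc 3 * m = m * 3 := by ring
      _ ≤ m * (c.2 + 1) := Nat.mul_le_mul_left m (by omega)
    have : m * n ≤ 3 * m := by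
      calc m * n ≤ m * 3 := Nat.mul_le_mul_left m hn3
      _ = 3 * m := by ring
    omega
  set S0 : Finset ℕ := (D.filter (fun c => c.2 = 0)).image Prod.fst with hS0
  set S1 : Finset ℕ := (D.filter (fun c => c.2 = 1)).image Prod.fst with hS1
  have hS0mem : ∀ x, x ∈ S0 ↔ (x, 0) ∈ D := by
    intro x
    simp only [hS0, Finset.mem_image, Finset.mem_filter]
    constructor
    · rintro ⟨⟨u, v⟩, ⟨hm2, hv⟩, rfl⟩
      simp only at hv; subst hv; exact hm2
    · intro hx; exact ⟨(x, 0), ⟨hx, rfl⟩, rfl⟩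
  have hS1mem : ∀ x, x ∈ S1 ↔ (x, 1) ∈ D := by
    intro x
    simp only [hS1, Finset.mem_image, Finset.mem_filter]
    constructor
    · rintro ⟨⟨u, v⟩, ⟨hm2, hv⟩, rfl⟩
      simp only at hv; subst hv; exact hm2
    · intro hx; exact ⟨(x, 1), ⟨hx, rfl⟩, rfl⟩
  have h0 : S0 = Finset.range S0.card :=
    dclosed_eq_range _ (fun x hx y hy => (hS0mem y).mpr (hY x 0 y 0 ((hS0mem x).mp hx) hy le_rfl))
  have h1 : S1 = Finset.range S1.card :=
    dclosed_eq_range _ (fun x hx y hy => (hS1mem y).mpr (hY x 1 y 1 ((hS1mem x).mp hx) hy le_rfl))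
  have hr0 : ∀ x, x ∈ S0 ↔ x < S0.card := by
    intro x
    conv_lhs => rw [h0]
    exact Finset.mem_range
  have hr1 : ∀ x, x ∈ S1 ↔ x < S1.card := by
    intro x
    conv_lhs => rw [h1]
    exact Finset.mem_range
  refine ⟨S0.card, S1.card, ?_, ?_, ?_, ?_⟩
  · have : S1 ⊆ S0 := fun x hx => (hS0mem x).mpr (hY x 1 x 0 ((hS1mem x).mp hx) le_rfl (by omega))
    exact Finset.card_le_card this
  · ext ⟨x, y⟩
    rw [mem_twoRow]
    constructor
    · intro hc
      have hy := hy1 _ hc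
      interval_cases y
      · exact Or.inl ⟨rfl, (hr0 x).mp ((hS0mem x).mpr hc)⟩
      · exact Or.inr ⟨rfl, (hr1 x).mp ((hS1mem x).mpr hc)⟩
    · rintro (⟨rfl, hx⟩ | ⟨rfl, hx⟩)
      · exact (hS0mem x).mp ((hr0 x).mpr hx)
      · exact (hS1mem x).mp ((hr1 x).mpr hx)
  · rcases Nat.eq_zero_or_pos S0.card with h | h
    · exact Or.inl h
    · right
      have hmem : (S0.card - 1, 0) ∈ D := (hS0mem _).mp ((hr0 _).mpr (by omega))
      have h5 := hB _ hmem
      simp only at h5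
      rw [Nat.sub_add_cancel h] at h5
      omega
  · rcases Nat.eq_zero_or_pos S1.card with h | h
    · exact Or.inl h
    · right
      have hmem : (S1.card - 1, 1) ∈ D := (hS1mem _).mp ((hr1 _).mpr (by omega))
      have h5 := hB _ hmem
      simp only at h5
      rw [Nat.sub_add_cancel h] at h5
      omega

lemma twoRow_young (p q : ℕ) (hq : q ≤ p) : IsYoung (twoRow p q) := by
  intro x y x' y' hmem hx hy
  rcases mem_twoRow.mp hmem with ⟨rfl, hxp⟩ | ⟨rfl, hxq⟩
  · exact mem_twoRow.mpr (Or.inl ⟨by omega, by omega⟩)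
  · rcases Nat.eq_zero_or_pos y' with h | h
    · exact mem_twoRow.mpr (Or.inl ⟨h, by omega⟩)
    · exact mem_twoRow.mpr (Or.inr ⟨by omega, by omega⟩)

lemma twoRow_below {m n p q : ℕ} (hp : p = 0 ∨ n * p + m < m * n)
    (hq : q = 0 ∨ n * q + 2 * m < m * n) : BelowDiag m n (twoRow p q) := by
  rintro ⟨x, y⟩ hmem
  rcases mem_twoRow.mp hmem with ⟨rfl, hx⟩ | ⟨rfl, hx⟩
  · simp only
    have : n * (x + 1) ≤ n * p := Nat.mul_le_mul_left n (by omega)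
    omega
  · simp only
    have : n * (x + 1) ≤ n * q := Nat.mul_le_mul_left n (by omega)
    omega

lemma hplus3 {m p q : ℕ} (hq : q ≤ p) (hp : 3*p < 2*m) (hqq : 3*q < m) :
    hplus m 3 (twoRow p q) = q + min (p-q) (m/3+1) + min q (p - m/3) := by
  rw [hplus_twoRow m 3 p q hq]
  have hc1 : ((Finset.range q).filter (fun x =>
      3*(q-(x+1)) ≤ m*(0+1) ∧ m*0 < 3*(q-(x+1)+1))).card = q := by
    rw [Finset.filter_true_of_mem, Finset.card_range]
    intro x hx
    rw [Finset.mem_range] at hx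
    constructor <;> omega
  rw [hc1]
  have hc0 : ((Finset.range p).filter (fun x =>
      3*(p-(x+1)) ≤ m*((if x < q then 1 else 0)+1) ∧
      m*(if x < q then 1 else 0) < 3*(p-(x+1)+1))).card
      = min q (p - m/3) + (p - max q (p - (m/3+1))) := by
    have hset : ((Finset.range p).filter (fun x =>
        3*(p-(x+1)) ≤ m*((if x < q then 1 else 0)+1) ∧
        m*(if x < q then 1 else 0) < 3*(p-(x+1)+1)))
        = Finset.range (min q (p - m/3)) ∪ Finset.Ico (max q (p - (m/3+1))) p := by
      ext x
      simp only [Finset.mem_filter, Finset.mem_range, Finset.mem_union, Finset.mem_Ico]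
      by_cases hxq : x < q <;> simp only [hxq, if_true, if_false] <;> omega
    rw [hset, Finset.card_union_of_disjoint, Finset.card_range, Nat.card_Ico]
    simp only [Finset.disjoint_left, Finset.mem_range, Finset.mem_Ico]
    intro x hx
    omega
  rw [hc0]
  omega

def hF (m p q : ℕ) : ℕ := q + min (p-q) (m/3+1) + min q (p - m/3)

def Valid3 (m p q : ℕ) : Prop := q ≤ p ∧ 3*p < 2*m ∧ 3*q < m

def PhiAux (k A s b : ℕ) : Prop :=
  (b ≤ k ∧ b ≤ s ∧ s ≤ 2*b) ∨
  (b % 2 = k % 2 ∧ k < b ∧ b ≤ s ∧ 2*s ≤ b + 3*k ∧ b + k ≤ 2*A) ∨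
  (b = s ∧ s % 2 = (k+1) % 2 ∧ k+1 ≤ s ∧ s + k + 1 ≤ 2*A) ∨
  (b % 2 = (k+1) % 2 ∧ k+1 ≤ b ∧ b < s ∧ 2*s + k + 1 ≤ b + 2*A)

def Phi3 (m s b : ℕ) : Prop := PhiAux (m/3) ((2*m-1)/3) s b

set_option maxHeartbeats 2000000 in
lemma phi_sym_aux (k A s b : ℕ) (hA : A = 2*k ∨ A = 2*k+1)
    (h : PhiAux k A s b) : PhiAux k A (k+A-b) (k+A-s) := by
  unfold PhiAux at *
  omega

lemma hF_eq (m p q : ℕ) :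
    hF m p q = q + ((p-q) - ((p-q) - (m/3+1))) + (q - (q - (p - m/3))) := by
  unfold hF; omega

lemma valid_toPhi {m p q : ℕ} (hm3 : m % 3 ≠ 0) (h : Valid3 m p q) :
    Phi3 m (p+q) (hF m p q) := by
  obtain ⟨h1, h2, h3⟩ := h
  rw [hF_eq]
  unfold Phi3 PhiAux
  omega

lemma ofPhi {m s b : ℕ} (hm3 : m % 3 ≠ 0) (h : Phi3 m s b) :
    ∃ p q, Valid3 m p q ∧ p + q = s ∧ hF m p q = b := by
  rcases h with h | h | h | h
  · exact ⟨b, s - b, by rw [hF_eq]; unfold Valid3; omega⟩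
  · exact ⟨(b + m/3)/2, s - (b + m/3)/2, by rw [hF_eq]; unfold Valid3; omega⟩
  · exact ⟨(s + m/3 + 1)/2, (s + m/3 + 1)/2 - (m/3 + 1), by rw [hF_eq]; unfold Valid3; omega⟩
  · exact ⟨s - (b - (m/3 + 1))/2, (b - (m/3 + 1))/2, by rw [hF_eq]; unfold Valid3; omega⟩

lemma phi_sym {m s b : ℕ} (hm3 : m % 3 ≠ 0) (h : Phi3 m s b) :
    Phi3 m (m - 1 - b) (m - 1 - s) := by
  have hA : (2*m-1)/3 = 2*(m/3) ∨ (2*m-1)/3 = 2*(m/3)+1 := by omega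
  have e1 : m - 1 - b = m/3 + (2*m-1)/3 - b := by omega
  have e2 : m - 1 - s = m/3 + (2*m-1)/3 - s := by omega
  rw [Phi3, e1, e2]
  exact phi_sym_aux _ _ _ _ hA h

lemma uniq3 {m p q p' q' : ℕ} (hm3 : m % 3 ≠ 0) (h : Valid3 m p q) (h' : Valid3 m p' q')
    (hs : p + q = p' + q') (hb : hF m p q = hF m p' q') : p = p' ∧ q = q' := by
  obtain ⟨h1, h2, h3⟩ := h
  obtain ⟨h1', h2', h3'⟩ := h'
  rw [hF_eq, hF_eq] at hb
  omega

lemma bounds3 {m p q : ℕ} (h : Valid3 m p q) : hF m p q ≤ p + q ∧ p + q ≤ m - 1 := by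
  obtain ⟨h1, h2, h3⟩ := h
  rw [hF_eq]
  omega

lemma card_eq_of_subsingleton {α β : Type*} {S : Set α} {S' : Set β}
    (h : S.Subsingleton) (h' : S'.Subsingleton) (hiff : S.Nonempty ↔ S'.Nonempty) :
    Nat.card S = Nat.card S' := by
  rcases Set.eq_empty_or_nonempty S with rfl | hne
  · rcases Set.eq_empty_or_nonempty S' with rfl | hne'
    · simp
    · exact absurd (hiff.mpr hne') (by simp)
  · obtain ⟨x, hx⟩ := hne
    obtain ⟨x', hx'⟩ := hiff.mp ⟨x, hx⟩
    have e : S = {x} := Set.eq_singleton_iff_unique_mem.mpr ⟨hx, fun y hy => h hy hx⟩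
    have e' : S' = {x'} := Set.eq_singleton_iff_unique_mem.mpr ⟨hx', fun y hy => h' hy hx'⟩
    rw [e, e']
    simp

lemma mem3 {m : ℕ} (hm : 0 < m) (a b : ℕ) (D : Finset (ℕ × ℕ)) :
    (IsYoung D ∧ BelowDiag m 3 D ∧ (m - 1) * (3 - 1) / 2 - D.card = a ∧ hplus m 3 D = b)
    ↔ ∃ p q, Valid3 m p q ∧ D = twoRow p q ∧ (m - 1) - (p + q) = a ∧ hF m p q = b := by
  constructor
  · rintro ⟨hY, hB, ha, hb⟩
    obtain ⟨p, q, hq, rfl, hp1, hq1⟩ := structure_lemma hm (by norm_num) (by norm_num) hY hB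
    refine ⟨p, q, ⟨hq, by omega, by omega⟩, rfl, ?_, ?_⟩
    · rw [card_twoRow] at ha
      omega
    · rw [hplus3 hq (by omega) (by omega)] at hb
      rw [hF_eq]
      omega
  · rintro ⟨p, q, ⟨hq, hp2, hq2⟩, rfl, ha, hb⟩
    refine ⟨twoRow_young p q hq, twoRow_below (Or.inr (by omega)) (Or.inr (by omega)), ?_, ?_⟩
    · rw [card_twoRow]
      omega
    · rw [hplus3 hq (by omega) (by omega), ← hb, hF_eq]
      omega

lemma swap3 {m : ℕ} (hm : 0 < m) (hm3 : m % 3 ≠ 0) (a b : ℕ)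
    (h : ∃ D : Finset (ℕ × ℕ), IsYoung D ∧ BelowDiag m 3 D ∧
      (m - 1) * (3 - 1) / 2 - D.card = a ∧ hplus m 3 D = b) :
    ∃ D : Finset (ℕ × ℕ), IsYoung D ∧ BelowDiag m 3 D ∧
      (m - 1) * (3 - 1) / 2 - D.card = b ∧ hplus m 3 D = a := by
  obtain ⟨D, hD⟩ := h
  obtain ⟨p, q, hV, rfl, ha, hb⟩ := (mem3 hm a b D).mp hD
  have hbd := bounds3 hV
  have hphi := phi_sym hm3 (valid_toPhi hm3 hV)
  rw [hb] at hphi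
  obtain ⟨p', q', hV', hs', hb'⟩ := ofPhi hm3 hphi
  refine ⟨twoRow p' q', (mem3 hm b a _).mpr ⟨p', q', hV', rfl, ?_, ?_⟩⟩
  · omega
  · omega

lemma case3 {m : ℕ} (hm : 0 < m) (hm3 : m % 3 ≠ 0) (a b : ℕ) :
    Nat.card {D : Finset (ℕ × ℕ) | IsYoung D ∧ BelowDiag m 3 D ∧
        (m - 1) * (3 - 1) / 2 - D.card = a ∧ hplus m 3 D = b} =
      Nat.card {D : Finset (ℕ × ℕ) | IsYoung D ∧ BelowDiag m 3 D ∧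
        (m - 1) * (3 - 1) / 2 - D.card = b ∧ hplus m 3 D = a} := by
  have hsub : ∀ a b : ℕ, ({D : Finset (ℕ × ℕ) | IsYoung D ∧ BelowDiag m 3 D ∧
      (m - 1) * (3 - 1) / 2 - D.card = a ∧ hplus m 3 D = b}).Subsingleton := by
    intro a b D1 h1 D2 h2
    obtain ⟨p1, q1, hV1, rfl, ha1, hb1⟩ := (mem3 hm a b D1).mp h1
    obtain ⟨p2, q2, hV2, rfl, ha2, hb2⟩ := (mem3 hm a b D2).mp h2
    have hc1 := bounds3 hV1
    have hc2 := bounds3 hV2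
    obtain ⟨rfl, rfl⟩ := uniq3 hm3 hV1 hV2 (by omega) (by omega)
    rfl
  exact card_eq_of_subsingleton (hsub a b) (hsub b a)
    ⟨fun ⟨D, hD⟩ => swap3 hm hm3 a b ⟨D, hD⟩, fun ⟨D, hD⟩ => swap3 hm hm3 b a ⟨D, hD⟩⟩

lemma hplus2 {m p : ℕ} (hp : 2*p < m) : hplus m 2 (twoRow p 0) = p := by
  rw [hplus_twoRow m 2 p 0 (Nat.zero_le p)]
  have h2 : ((Finset.range 0).filter (fun x =>
      2*(0-(x+1)) ≤ m*(0+1) ∧ m*0 < 2*(0-(x+1)+1))).card = 0 := by simp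
  have h3 : ((Finset.range p).filter (fun x =>
      2*(p-(x+1)) ≤ m*((if x < 0 then 1 else 0)+1) ∧
      m*(if x < 0 then 1 else 0) < 2*(p-(x+1)+1))) = Finset.range p := by
    apply Finset.filter_true_of_mem
    intro x hx
    rw [Finset.mem_range] at hx
    simp only [Nat.not_lt_zero, if_false]
    omega
  rw [h2, h3, Finset.card_range]

  omega

lemma mem2 {m : ℕ} (hm : 0 < m) (a b : ℕ) (D : Finset (ℕ × ℕ)) :
    (IsYoung D ∧ BelowDiag m 2 D ∧ (m - 1) * (2 - 1) / 2 - D.card = a ∧ hplus m 2 D = b)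
    ↔ ∃ p, 2*p < m ∧ D = twoRow p 0 ∧ (m - 1) / 2 - p = a ∧ p = b := by
  constructor
  · rintro ⟨hY, hB, ha, hb⟩
    obtain ⟨p, q, hq, rfl, hp1, hq1⟩ := structure_lemma hm (by norm_num) (by norm_num) hY hB
    have hq0 : q = 0 := by omega
    subst hq0
    have hp2 : 2*p < m := by omega
    refine ⟨p, hp2, rfl, ?_, ?_⟩
    · rw [card_twoRow] at ha
      omega
    · rwa [hplus2 hp2] at hb
  · rintro ⟨p, hp, rfl, ha, rfl⟩
    refine ⟨twoRow_young p 0 (Nat.zero_le p), twoRow_below (Or.inr (by omega)) (Or.inl rfl), ?_, ?_⟩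
    · rw [card_twoRow]
      omega
    · exact hplus2 hp

lemma case2 {m : ℕ} (hm : 0 < m) (hm2 : m % 2 = 1) (a b : ℕ) :
    Nat.card {D : Finset (ℕ × ℕ) | IsYoung D ∧ BelowDiag m 2 D ∧
        (m - 1) * (2 - 1) / 2 - D.card = a ∧ hplus m 2 D = b} =
      Nat.card {D : Finset (ℕ × ℕ) | IsYoung D ∧ BelowDiag m 2 D ∧
        (m - 1) * (2 - 1) / 2 - D.card = b ∧ hplus m 2 D = a} := by
  have hsub : ∀ a b : ℕ, ({D : Finset (ℕ × ℕ) | IsYoung D ∧ BelowDiag m 2 D ∧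
      (m - 1) * (2 - 1) / 2 - D.card = a ∧ hplus m 2 D = b}).Subsingleton := by
    intro a b D1 h1 D2 h2
    obtain ⟨p1, _, rfl, _, hb1⟩ := (mem2 hm a b D1).mp h1
    obtain ⟨p2, _, rfl, _, hb2⟩ := (mem2 hm a b D2).mp h2
    rw [hb1, hb2]
  have hswap : ∀ a b : ℕ, (∃ D : Finset (ℕ × ℕ), IsYoung D ∧ BelowDiag m 2 D ∧
      (m - 1) * (2 - 1) / 2 - D.card = a ∧ hplus m 2 D = b) →
      (∃ D : Finset (ℕ × ℕ), IsYoung D ∧ BelowDiag m 2 D ∧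
      (m - 1) * (2 - 1) / 2 - D.card = b ∧ hplus m 2 D = a) := by
    intro a b ⟨D, hD⟩
    obtain ⟨p, hp, rfl, ha, rfl⟩ := (mem2 hm a b D).mp hD
    exact ⟨twoRow a 0, (mem2 hm (p) a _).mpr ⟨a, by omega, rfl, by omega, rfl⟩⟩
  exact card_eq_of_subsingleton (hsub a b) (hsub b a)
    ⟨fun ⟨D, hD⟩ => hswap a b ⟨D, hD⟩, fun ⟨D, hD⟩ => hswap b a ⟨D, hD⟩⟩

lemma mem1 {m : ℕ} (hm : 0 < m) (a b : ℕ) (D : Finset (ℕ × ℕ)) :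
    (IsYoung D ∧ BelowDiag m 1 D ∧ (m - 1) * (1 - 1) / 2 - D.card = a ∧ hplus m 1 D = b)
    ↔ (D = ∅ ∧ a = 0 ∧ b = 0) := by
  constructor
  · rintro ⟨hY, hB, ha, hb⟩
    obtain ⟨p, q, hq, rfl, hp1, hq1⟩ := structure_lemma hm (by norm_num) (by norm_num) hY hB
    have hp0 : p = 0 := by omega
    have hq0 : q = 0 := by omega
    subst hp0; subst hq0
    have hD : twoRow 0 0 = (∅ : Finset (ℕ × ℕ)) := by
      simp [twoRow]
    refine ⟨hD, ?_, ?_⟩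
    · rw [card_twoRow] at ha
      omega
    · rw [hD] at hb
      have h0 : hplus m 1 (∅ : Finset (ℕ × ℕ)) = 0 := by
        rw [hplus]
        simp
      omega
  · rintro ⟨rfl, rfl, rfl⟩
    refine ⟨?_, ?_, by simp, by rw [hplus]; simp⟩
    · intro x y x' y' hmem
      simp at hmem
    · intro c hc
      simp at hc

lemma case1 {m : ℕ} (hm : 0 < m) (a b : ℕ) :
    Nat.card {D : Finset (ℕ × ℕ) | IsYoung D ∧ BelowDiag m 1 D ∧
        (m - 1) * (1 - 1) / 2 - D.card = a ∧ hplus m 1 D = b} =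
      Nat.card {D : Finset (ℕ × ℕ) | IsYoung D ∧ BelowDiag m 1 D ∧
        (m - 1) * (1 - 1) / 2 - D.card = b ∧ hplus m 1 D = a} := by
  have hsub : ∀ a b : ℕ, ({D : Finset (ℕ × ℕ) | IsYoung D ∧ BelowDiag m 1 D ∧
      (m - 1) * (1 - 1) / 2 - D.card = a ∧ hplus m 1 D = b}).Subsingleton := by
    intro a b D1 h1 D2 h2
    obtain ⟨rfl, _, _⟩ := (mem1 hm a b D1).mp h1
    obtain ⟨rfl, _, _⟩ := (mem1 hm a b D2).mp h2
    rfl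
  refine card_eq_of_subsingleton (hsub a b) (hsub b a) ?_
  constructor
  · rintro ⟨D, hD⟩
    obtain ⟨rfl, rfl, rfl⟩ := (mem1 hm _ _ D).mp hD
    exact ⟨∅, (mem1 hm 0 0 ∅).mpr ⟨rfl, rfl, rfl⟩⟩
  · rintro ⟨D, hD⟩
    obtain ⟨rfl, rfl, rfl⟩ := (mem1 hm _ _ D).mp hD
    exact ⟨∅, (mem1 hm 0 0 ∅).mpr ⟨rfl, rfl, rfl⟩⟩

/-- **Full symmetry `c_{m,n}(q,t) = c_{m,n}(t,q)` for `min(m,n) ≤ 3`.** For coprime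
positive `m, n` with `n ≤ 3` and every pair `(a, b)`, the number of Young diagrams `D`
below the diagonal of the `m × n` rectangle with `δ - |D| = a` and `h₊(D) = b` equals
the number of those with `δ - |D| = b` and `h₊(D) = a`, where `δ = (m-1)(n-1)/2`. -/
theorem symmetry_n_le_three (m n : ℕ) (hm : 0 < m) (hn : 0 < n) (hn3 : n ≤ 3)
    (hmn : Nat.Coprime m n) (a b : ℕ) :
    Nat.card {D : Finset (ℕ × ℕ) | IsYoung D ∧ BelowDiag m n D ∧
        (m - 1) * (n - 1) / 2 - D.card = a ∧ hplus m n D = b} =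
      Nat.card {D : Finset (ℕ × ℕ) | IsYoung D ∧ BelowDiag m n D ∧
        (m - 1) * (n - 1) / 2 - D.card = b ∧ hplus m n D = a} := by
  interval_cases n
  · exact case1 hm a b
  · have hm2 : m % 2 = 1 := by
      rcases Nat.even_or_odd m with ⟨t, rfl⟩ | ho
      · exact absurd (Nat.Coprime.eq_one_of_dvd hmn.symm ⟨t, by omega⟩) (by norm_num)
      · obtain ⟨t, rfl⟩ := ho
        omega
    exact case2 hm hm2 a b
  · have hm3 : m % 3 ≠ 0 := by
      intro h
      have : (3 : ℕ) ∣ m := ⟨m / 3, by omega⟩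
      exact absurd (Nat.Coprime.eq_one_of_dvd hmn.symm this) (by norm_num)
    exact case3 hm hm3 a b
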